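/- For every countable ordinal α, T_P(M_α) =_α M_α, i.e., T_P(M_α) and M_α have the same sets of atoms with value T_β and the same sets of atoms with value F_β for all β ≤ α. -/

import Mathlib

open Ordinal Set

noncomputable section
attribute [local instance] Classical.propDecidable

namespace IVS

/-- Countable ordinals: ordinals below `ω₁`. -/
abbrev Ord1 := {o : Ordinal.{0} // o < ω₁}

theorem zero_lt_omega1 : (0 : Ordinal) < ω₁ := omega_pos 1

theorem succ_lt_omega1 {o : Ordinal} (h : o < ω₁) : o + 1 < ω₁ := by
  have := (Cardinal.isSuccLimit_omega 1).succ_lt h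
  rwa [Order.succ_eq_add_one] at this

/-- zero as a countable ordinal -/
def O0 : Ord1 := ⟨0, zero_lt_omega1⟩

/-- successor on countable ordinals -/
def Ord1.succ (a : Ord1) : Ord1 := ⟨a.1 + 1, succ_lt_omega1 a.2⟩

/-- The truth domain `V`: `F_α < ⋯ < 0 < ⋯ < T_α` realized as a lexicographic sum. -/
abbrev TV := Ord1 ⊕ₗ (Unit ⊕ₗ Ord1ᵒᵈ)

/-- the false value `F_α` -/
def TV.F (a : Ord1) : TV := toLex (Sum.inl a)
/-- the middle value `0` -/
def TV.Z : TV := toLex (Sum.inr (toLex (Sum.inl ())))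
/-- the true value `T_α` -/
def TV.T (a : Ord1) : TV := toLex (Sum.inr (toLex (Sum.inr (OrderDual.toDual a))))

/-- the order of a truth value (`⊤` codes `+∞`, the order of `0`) -/
def ordOf (v : TV) : WithTop Ordinal :=
  match ofLex v with
  | .inl a => (a.1 : Ordinal)
  | .inr b =>
    match ofLex b with
    | .inl _ => ⊤
    | .inr a => ((OrderDual.ofDual a).1 : Ordinal)

/-- negation-as-failure: `¬F_α = T_{α+1}`, `¬T_α = F_{α+1}`, `¬0 = 0`. -/
def negv (v : TV) : TV :=
  match ofLex v with
  | .inl a => TV.T a.succ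
  | .inr b =>
    match ofLex b with
    | .inl _ => TV.Z
    | .inr a => TV.F (OrderDual.ofDual a).succ

/-- Literals of a propositional normal program (atoms are natural numbers). -/
inductive Lit where
  | pos (n : ℕ)
  | neg (n : ℕ)
  | tt
  | ff

/-- A normal program clause: a head atom and a body which is a conjunction of literals. -/
structure Clause where
  head : ℕ
  body : List Lit

/-- A (possibly infinite) propositional normal logic program. -/
abbrev Program := Set Clause

/-- Infinite-valued interpretations. -/
abbrev Interp := ℕ → TV

/-- the interpretation assigning `F₀` to every atom (denoted `∅` in the paper) -/
def botI : Interp := fun _ => TV.F O0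

def evalLit (I : Interp) : Lit → TV
  | .pos n => I n
  | .neg n => negv (I n)
  | .tt => TV.T O0
  | .ff => TV.F O0

/-- value of a body (conjunction evaluated by `min`; empty conjunction is `T₀`) -/
def evalBody (I : Interp) (b : List Lit) : TV :=
  (b.map (evalLit I)).foldr min (TV.T O0)

/-- least upper bound in `V` (well-defined by the lub-existence theorem) -/
def lub (S : Set TV) : TV := if h : ∃ v, IsLUB S v then h.choose else TV.Z

/-- the immediate consequence operator -/
def TP (P : Program) (I : Interp) : Interp :=
  fun p => lub {v | ∃ c ∈ P, c.head = p ∧ evalBody I c.body = v}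

/-- `I` is an (infinite-valued) model of `P` -/
def isModel (P : Program) (I : Interp) : Prop :=
  ∀ c ∈ P, evalBody I c.body ≤ I c.head

/-- the level set `I ∥ v` -/
def level (I : Interp) (v : TV) : Set ℕ := {p | I p = v}

/-- `I =_α J` -/
def eqA (α : Ord1) (I J : Interp) : Prop :=
  ∀ β ≤ α, level I (TV.T β) = level J (TV.T β) ∧ level I (TV.F β) = level J (TV.F β)

/-- `I ⊏_α J` -/
def sqltA (α : Ord1) (I J : Interp) : Prop :=
  (∀ β < α, eqA β I J) ∧
    ((level I (TV.T α) ⊂ level J (TV.T α) ∧ level J (TV.F α) ⊆ level I (TV.F α)) ∨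
     (level I (TV.T α) ⊆ level J (TV.T α) ∧ level J (TV.F α) ⊂ level I (TV.F α)))

/-- `I ⊑_α J` -/
def sqleA (α : Ord1) (I J : Interp) : Prop := eqA α I J ∨ sqltA α I J

/-- `I ⊏_∞ J` -/
def sqltInf (I J : Interp) : Prop := ∃ α : Ord1, sqltA α I J

/-- `I ⊑_∞ J` -/
def sqleInf (I J : Interp) : Prop := I = J ∨ sqltInf I J

/-- the sequence `T_P^n(I)` is an `α`-chain -/
def isChainA (P : Program) (α : Ord1) (I : Interp) : Prop :=
  ∀ n : ℕ, sqleA α ((TP P)^[n] I) ((TP P)^[n + 1] I)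

/-- the interpretation `T_{P,α}^ω(I)` -/
def TPomega (P : Program) (α : Ord1) (I : Interp) : Interp := fun p =>
  if ordOf (I p) < (α.1 : WithTop Ordinal) then I p
  else if ∃ n : ℕ, (TP P)^[n] I p = TV.T α then TV.T α
  else if ∀ n : ℕ, (TP P)^[n] I p = TV.F α then TV.F α
  else TV.F α.succ

/-- `⊔_{β<α} M_β` for a family defined below `α` -/
def sqcupI (α : Ord1) (f : ∀ β : Ordinal, β < α.1 → Interp) : Interp := fun p =>
  if h : ∃ β : Ordinal, ∃ hb : β < α.1, ordOf (f β hb p) = (β : WithTop Ordinal)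
  then f h.choose h.choose_spec.choose p
  else TV.F α

/-- the approximations `M_α` to the minimum model (junk values for `α ≥ ω₁`) -/
def MA (P : Program) (o : Ordinal) : Interp :=
  Ordinal.limitRecOn o
    (TPomega P O0 botI)
    (fun o' ih => if h : o' + 1 < ω₁ then TPomega P ⟨o' + 1, h⟩ ih else ih)
    (fun o' _ ih =>
      if h : o' < ω₁ then TPomega P ⟨o', h⟩ (sqcupI ⟨o', h⟩ ih) else botI)

/-- `M_α` for a countable ordinal `α` -/
def Mα (P : Program) (α : Ord1) : Interp := MA P α.1

/-- the defining property of the depth `δ` of a program -/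
def isDepth (P : Program) (δ : Ord1) : Prop :=
  (level (Mα P δ) (TV.T δ) = ∅ ∧ level (Mα P δ) (TV.F δ) = ∅) ∧
    ∀ β : Ord1, β < δ →
      (level (Mα P β) (TV.T β) ≠ ∅ ∨ level (Mα P β) (TV.F β) ≠ ∅)

/-- the depth of a program -/
def depth (P : Program) : Ord1 :=
  if h : ∃ δ : Ord1, isDepth P δ then h.choose else O0

/-- the minimum model `M_P` -/
def MP (P : Program) : Interp := fun p =>
  if ordOf (Mα P (depth P) p) < ((depth P).1 : WithTop Ordinal)
  then Mα P (depth P) p else TV.Z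

/-- the set of all infinite-valued models of `P` -/
def models (P : Program) : Set Interp := {I | isModel P I}

/-- `M ♯ α`: the part of `M` consisting of values of order `α` -/
def sharp (I : Interp) (α : Ord1) : Set (ℕ × TV) :=
  {pv | I pv.1 = pv.2 ∧ ordOf pv.2 = (α.1 : WithTop Ordinal)}

/-- `⨀^α S = ⋀^α S ∪ ⋁^α S` -/
def odot (α : Ord1) (S : Set Interp) : Set (ℕ × TV) :=
  {pv | (∃ p : ℕ, pv = (p, TV.T α) ∧ ∀ M ∈ S, M p = TV.T α) ∨
        (∃ p : ℕ, pv = (p, TV.F α) ∧ ∃ M ∈ S, M p = TV.F α)}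

/-- the sets `S_α` of the model intersection construction (junk for `α ≥ ω₁`) -/
def SA (P : Program) (o : Ordinal) : Set Interp :=
  Ordinal.limitRecOn o
    {M ∈ models P | sharp M O0 = odot O0 (models P)}
    (fun o' ih =>
      if h : o' + 1 < ω₁ then {M ∈ ih | sharp M ⟨o' + 1, h⟩ = odot ⟨o' + 1, h⟩ ih} else ih)
    (fun o' _ ih =>
      if h : o' < ω₁ then
        {M : Interp | M ∈ (⋂ (b : Ordinal) (hb : b < o'), ih b hb) ∧
          sharp M ⟨o', h⟩ = odot ⟨o', h⟩ (⋂ (b : Ordinal) (hb : b < o'), ih b hb)}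
      else ∅)


/-! ### TV API -/

theorem TV.cases (v : TV) : (∃ a, v = TV.F a) ∨ v = TV.Z ∨ ∃ a, v = TV.T a := by
  obtain a | b := v
  · exact Or.inl ⟨a, rfl⟩
  · obtain u | a := b
    · exact Or.inr (Or.inl rfl)
    · exact Or.inr (Or.inr ⟨a, rfl⟩)

@[simp] theorem F_lt_F {a b : Ord1} : TV.F a < TV.F b ↔ a < b := Sum.Lex.inl_lt_inl_iff
@[simp] theorem F_le_F {a b : Ord1} : TV.F a ≤ TV.F b ↔ a ≤ b := Sum.Lex.inl_le_inl_iff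
@[simp] theorem T_lt_T {a b : Ord1} : TV.T a < TV.T b ↔ b < a := by
  rw [TV.T, TV.T, Sum.Lex.inr_lt_inr_iff, Sum.Lex.inr_lt_inr_iff]
  exact Iff.rfl
@[simp] theorem T_le_T {a b : Ord1} : TV.T a ≤ TV.T b ↔ b ≤ a := by
  rw [TV.T, TV.T, Sum.Lex.inr_le_inr_iff, Sum.Lex.inr_le_inr_iff]
  exact Iff.rfl
@[simp] theorem F_lt_Z {a : Ord1} : TV.F a < TV.Z := Sum.Lex.inl_lt_inr _ _
@[simp] theorem F_lt_T {a b : Ord1} : TV.F a < TV.T b := Sum.Lex.inl_lt_inr _ _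
@[simp] theorem Z_lt_T {a : Ord1} : TV.Z < TV.T a := by
  rw [TV.Z, TV.T, Sum.Lex.inr_lt_inr_iff]
  exact Sum.Lex.inl_lt_inr _ _
@[simp] theorem F_ne_Z {a : Ord1} : TV.F a ≠ TV.Z := ne_of_lt F_lt_Z
@[simp] theorem F_ne_T {a b : Ord1} : TV.F a ≠ TV.T b := ne_of_lt F_lt_T
@[simp] theorem Z_ne_T {a : Ord1} : TV.Z ≠ TV.T a := ne_of_lt Z_lt_T
@[simp] theorem T_ne_F {a b : Ord1} : TV.T a ≠ TV.F b := Ne.symm F_ne_T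
@[simp] theorem Z_ne_F {a : Ord1} : TV.Z ≠ TV.F a := Ne.symm F_ne_Z
@[simp] theorem T_ne_Z {a : Ord1} : TV.T a ≠ TV.Z := Ne.symm Z_ne_T
@[simp] theorem F_inj {a b : Ord1} : TV.F a = TV.F b ↔ a = b := by
  constructor
  · intro h; exact le_antisymm (F_le_F.1 h.le) (F_le_F.1 h.ge)
  · rintro rfl; rfl
@[simp] theorem T_inj {a b : Ord1} : TV.T a = TV.T b ↔ a = b := by
  constructor
  · intro h; exact le_antisymm (T_le_T.1 h.ge) (T_le_T.1 h.le)
  · rintro rfl; rfl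

@[simp] theorem ordOf_F (a : Ord1) : ordOf (TV.F a) = (a.1 : WithTop Ordinal) := rfl
@[simp] theorem ordOf_T (a : Ord1) : ordOf (TV.T a) = (a.1 : WithTop Ordinal) := rfl
@[simp] theorem ordOf_Z : ordOf TV.Z = ⊤ := rfl
@[simp] theorem negv_F (a : Ord1) : negv (TV.F a) = TV.T a.succ := rfl
@[simp] theorem negv_T (a : Ord1) : negv (TV.T a) = TV.F a.succ := rfl
@[simp] theorem negv_Z : negv TV.Z = TV.Z := rfl

theorem Ord1.lt_succ (a : Ord1) : a < a.succ := by
  show a.1 < a.1 + 1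
  exact lt_add_one a.1
theorem Ord1.succ_le_of_lt {a b : Ord1} (h : a < b) : a.succ ≤ b := by
  show a.1 + 1 ≤ b.1
  have : a.1 < b.1 := h
  exact Order.add_one_le_of_lt this
theorem Ord1.succ_ne (a : Ord1) : a.succ ≠ a := ne_of_gt a.lt_succ

/-- values `≤ F a` are exactly the `F b`, `b ≤ a` -/
theorem le_F_iff {v : TV} {a : Ord1} : v ≤ TV.F a ↔ ∃ b, b ≤ a ∧ v = TV.F b := by
  constructor
  · intro h
    rcases TV.cases v with ⟨b, rfl⟩ | rfl | ⟨b, rfl⟩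
    · exact ⟨b, F_le_F.1 h, rfl⟩
    · exact absurd h (not_le.2 F_lt_Z)
    · exact absurd h (not_le.2 F_lt_T)
  · rintro ⟨b, hb, rfl⟩; exact F_le_F.2 hb
theorem lt_F_iff {v : TV} {a : Ord1} : v < TV.F a ↔ ∃ b, b < a ∧ v = TV.F b := by
  constructor
  · intro h
    rcases le_F_iff.1 h.le with ⟨b, hb, rfl⟩
    exact ⟨b, F_lt_F.1 h, rfl⟩
  · rintro ⟨b, hb, rfl⟩; exact F_lt_F.2 hb
theorem T_le_iff {v : TV} {a : Ord1} : TV.T a ≤ v ↔ ∃ b, b ≤ a ∧ v = TV.T b := by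
  constructor
  · intro h
    rcases TV.cases v with ⟨b, rfl⟩ | rfl | ⟨b, rfl⟩
    · exact absurd h (not_le.2 F_lt_T)
    · exact absurd h (not_le.2 Z_lt_T)
    · exact ⟨b, T_le_T.1 h, rfl⟩
  · rintro ⟨b, hb, rfl⟩; exact T_le_T.2 hb
theorem T_lt_iff {v : TV} {a : Ord1} : TV.T a < v ↔ ∃ b, b < a ∧ v = TV.T b := by
  constructor
  · intro h
    rcases T_le_iff.1 h.le with ⟨b, hb, rfl⟩
    exact ⟨b, T_lt_T.1 h, rfl⟩
  · rintro ⟨b, hb, rfl⟩; exact T_lt_T.2 hb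
theorem F_lt_of_ne_F {v : TV} {a : Ord1} (h : ∀ b ≤ a, v ≠ TV.F b) : TV.F a < v := by
  rcases lt_or_ge (TV.F a) v with h1 | h1
  · exact h1
  · rcases le_F_iff.1 h1 with ⟨b, hb, rfl⟩
    exact absurd rfl (h b hb)
theorem le_T0 (v : TV) : v ≤ TV.T O0 := by
  rcases TV.cases v with ⟨b, rfl⟩ | rfl | ⟨b, rfl⟩
  · exact F_lt_T.le
  · exact Z_lt_T.le
  · exact T_le_T.2 (by exact (zero_le : (0 : Ordinal) ≤ b.1))

theorem ordOf_lt_iff {v : TV} {c : Ordinal} :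
    ordOf v < (c : WithTop Ordinal) ↔ ∃ a : Ord1, a.1 < c ∧ (v = TV.F a ∨ v = TV.T a) := by
  constructor
  · intro h
    rcases TV.cases v with ⟨b, rfl⟩ | rfl | ⟨b, rfl⟩
    · exact ⟨b, by simpa using h, Or.inl rfl⟩
    · simp at h
    · exact ⟨b, by simpa using h, Or.inr rfl⟩
  · rintro ⟨a, ha, rfl | rfl⟩ <;> simpa using ha

theorem ordOf_eq_iff {v : TV} {c : Ordinal} :
    ordOf v = (c : WithTop Ordinal) ↔ ∃ a : Ord1, a.1 = c ∧ (v = TV.F a ∨ v = TV.T a) := by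
  constructor
  · intro h
    rcases TV.cases v with ⟨b, rfl⟩ | rfl | ⟨b, rfl⟩
    · exact ⟨b, by simpa using h, Or.inl rfl⟩
    · simp at h
    · exact ⟨b, by simpa using h, Or.inr rfl⟩
  · rintro ⟨a, ha, rfl | rfl⟩ <;> simpa using ha


section Lemmas

/-! ### lub lemmas -/

theorem lub_eq_of_isLUB {S : Set TV} {v : TV} (h : IsLUB S v) : lub S = v := by
  rw [lub, dif_pos ⟨v, h⟩]
  exact (Exists.choose_spec (⟨v, h⟩ : ∃ v, IsLUB S v)).unique h

theorem isLUB_of_lub_eq {S : Set TV} {v : TV} (h : lub S = v) (hv : v ≠ TV.Z) : IsLUB S v := by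
  rw [lub] at h
  split at h
  · next hh => exact h ▸ hh.choose_spec
  · exact absurd h.symm hv

theorem isLUB_T_mem {S : Set TV} {a : Ord1} (h : IsLUB S (TV.T a)) : TV.T a ∈ S := by
  by_contra hmem
  have hub : TV.T a.succ ∈ upperBounds S := by
    intro s hs
    have hlt : s < TV.T a := lt_of_le_of_ne (h.1 hs) (by rintro rfl; exact hmem hs)
    rcases TV.cases s with ⟨b, rfl⟩ | rfl | ⟨b, rfl⟩
    · exact F_lt_T.le
    · exact Z_lt_T.le
    · exact T_le_T.2 (Ord1.succ_le_of_lt (T_lt_T.1 hlt))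
  exact absurd (T_le_T.1 (h.2 hub)) (not_le.2 a.lt_succ)

/-! ### the "low" predicate -/

def lo (α : Ord1) (v : TV) : Prop := ordOf v < (α.1 : WithTop Ordinal)

theorem lo_iff {α : Ord1} {v : TV} : lo α v ↔ ∃ b : Ord1, b < α ∧ (v = TV.F b ∨ v = TV.T b) := by
  rw [lo, ordOf_lt_iff]
  exact Iff.rfl

theorem lo_F {α b : Ord1} : lo α (TV.F b) ↔ b < α := by
  rw [lo, ordOf_F]; exact WithTop.coe_lt_coe
theorem lo_T {α b : Ord1} : lo α (TV.T b) ↔ b < α := by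
  rw [lo, ordOf_T]; exact WithTop.coe_lt_coe
@[simp] theorem not_lo_Z {α : Ord1} : ¬ lo α TV.Z := by
  rw [lo, ordOf_Z]; simp
@[simp] theorem not_lo_F_self {α : Ord1} : ¬ lo α (TV.F α) := by simp [lo_F]
@[simp] theorem not_lo_T_self {α : Ord1} : ¬ lo α (TV.T α) := by simp [lo_T]
@[simp] theorem not_lo_F_succ {α : Ord1} : ¬ lo α (TV.F α.succ) := by
  rw [lo_F]
  exact not_lt.2 (le_of_lt α.lt_succ)

theorem Fb_lt_high {α b : Ord1} {v : TV} (hb : b < α) (hv : ¬ lo α v) : TV.F b < v := by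
  rcases TV.cases v with ⟨c, rfl⟩ | rfl | ⟨c, rfl⟩
  · exact F_lt_F.2 (lt_of_lt_of_le hb (not_lt.1 (fun hc => hv (lo_F.2 hc))))
  · exact F_lt_Z
  · exact F_lt_T

theorem high_lt_Tb {α b : Ord1} {v : TV} (hb : b < α) (hv : ¬ lo α v) : v < TV.T b := by
  rcases TV.cases v with ⟨c, rfl⟩ | rfl | ⟨c, rfl⟩
  · exact F_lt_T
  · exact Z_lt_T
  · exact T_lt_T.2 (lt_of_lt_of_le hb (not_lt.1 (fun hc => hv (lo_T.2 hc))))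

theorem le_T_of {α : Ord1} {v : TV} (h : ∀ b, b < α → v ≠ TV.T b) : v ≤ TV.T α := by
  by_contra hc
  rcases T_lt_iff.1 (not_le.1 hc) with ⟨b, hb, rfl⟩
  exact h b hb rfl

theorem le_F_of {α : Ord1} {v : TV} (h1 : ¬ lo α v) (h2 : TV.F α < v → False) : v ≤ TV.F α := by
  by_contra hc
  exact h2 (not_le.1 hc)

/-! ### body (min) lemmas -/

theorem body_cons' {I : Interp} {x : Lit} {xs : List Lit} :
    evalBody I (x :: xs) = evalLit I x ⊓ evalBody I xs := rfl

theorem inf_choice (a b : TV) : a ⊓ b = a ∨ a ⊓ b = b := by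
  rcases le_total a b with h | h
  · exact Or.inl (inf_eq_left.2 h)
  · exact Or.inr (inf_eq_right.2 h)

theorem body_le {I : Interp} {b : List Lit} {l : Lit} (hl : l ∈ b) :
    evalBody I b ≤ evalLit I l := by
  induction b with
  | nil => cases hl
  | cons x xs ih =>
    rw [body_cons']
    rcases List.mem_cons.1 hl with rfl | hl'
    · exact inf_le_left
    · exact le_trans inf_le_right (ih hl')

theorem body_nil {I : Interp} : evalBody I [] = TV.T O0 := rfl

theorem lt_body {I : Interp} {b : List Lit} {c : TV} (h0 : c < TV.T O0)
    (h : ∀ l ∈ b, c < evalLit I l) : c < evalBody I b := by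
  induction b with
  | nil => exact h0
  | cons x xs ih =>
    rw [body_cons']
    rcases inf_choice (evalLit I x) (evalBody I xs) with hc | hc <;> rw [hc]
    · exact h x (List.mem_cons_self)
    · exact ih (fun l hl => h l (List.mem_cons_of_mem _ hl))

theorem body_eq_of_lits {X Y : Interp} {b : List Lit}
    (h : ∀ l ∈ b, evalLit X l = evalLit Y l) : evalBody X b = evalBody Y b := by
  induction b with
  | nil => rfl
  | cons x xs ih =>
    rw [body_cons', body_cons', h x (List.mem_cons_self),
      ih (fun l hl => h l (List.mem_cons_of_mem _ hl))]

/-! ### the relation `Rel` -/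

def Rel (α : Ord1) (x y : TV) : Prop :=
  (lo α x ∨ lo α y → x = y) ∧ (x = TV.T α → y = TV.T α) ∧ (y = TV.F α → x = TV.F α)

theorem rel_refl {α : Ord1} {v : TV} : Rel α v v := ⟨fun _ => Eq.refl v, id, id⟩

theorem inf_low_eq {α : Ord1} {x1 x2 y1 y2 : TV}
    (e1 : lo α x1 ∨ lo α y1 → x1 = y1) (e2 : lo α x2 ∨ lo α y2 → x2 = y2)
    (h : lo α (x1 ⊓ x2)) : y1 ⊓ y2 = x1 ⊓ x2 := by
  rcases le_total x1 x2 with h12 | h21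
  · rw [inf_eq_left.2 h12] at h ⊢
    have hxy : x1 = y1 := e1 (Or.inl h)
    have hle : x1 ≤ y2 := by
      by_cases hl2 : lo α x2 ∨ lo α y2
      · rw [← e2 hl2]; exact h12
      · push_neg at hl2
        rcases lo_iff.1 h with ⟨b, hb, rfl | rfl⟩
        · exact (Fb_lt_high hb hl2.2).le
        · rcases T_le_iff.1 h12 with ⟨c, hc, rfl⟩
          exact absurd (lo_T.2 (lt_of_le_of_lt hc hb)) hl2.1
    rw [← hxy]
    exact inf_eq_left.2 hle
  · rw [inf_eq_right.2 h21] at h ⊢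
    have hxy : x2 = y2 := e2 (Or.inl h)
    have hle : x2 ≤ y1 := by
      by_cases hl1 : lo α x1 ∨ lo α y1
      · rw [← e1 hl1]; exact h21
      · push_neg at hl1
        rcases lo_iff.1 h with ⟨b, hb, rfl | rfl⟩
        · exact (Fb_lt_high hb hl1.2).le
        · rcases T_le_iff.1 h21 with ⟨c, hc, rfl⟩
          exact absurd (lo_T.2 (lt_of_le_of_lt hc hb)) hl1.1
    rw [← hxy]
    exact inf_eq_right.2 hle

theorem rel_inf {α : Ord1} {x1 x2 y1 y2 : TV} (h1 : Rel α x1 y1) (h2 : Rel α x2 y2) :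
    Rel α (x1 ⊓ x2) (y1 ⊓ y2) := by
  refine ⟨?_, ?_, ?_⟩
  · rintro (h | h)
    · exact (inf_low_eq h1.1 h2.1 h).symm
    · exact inf_low_eq (fun o => (h1.1 o.symm).symm) (fun o => (h2.1 o.symm).symm) h
  · intro h
    have key : ∀ x y : TV, Rel α x y → TV.T α ≤ x → TV.T α ≤ y ∧ (x = TV.T α → y = TV.T α) := by
      intro x y hr hx
      rcases T_le_iff.1 hx with ⟨b, hb, rfl⟩
      rcases lt_or_eq_of_le hb with hlt | rfl
      · have := hr.1 (Or.inl (lo_T.2 hlt))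
        exact ⟨this ▸ hx, fun hTb => absurd (T_inj.1 hTb) (ne_of_lt hlt)⟩
      · exact ⟨(hr.2.1 rfl) ▸ le_rfl, fun _ => hr.2.1 rfl⟩
    have ha1 : TV.T α ≤ x1 := by rw [← h]; exact inf_le_left
    have ha2 : TV.T α ≤ x2 := by rw [← h]; exact inf_le_right
    have k1 := key _ _ h1 ha1
    have k2 := key _ _ h2 ha2
    refine le_antisymm ?_ (le_inf k1.1 k2.1)
    rcases inf_choice x1 x2 with hc | hc <;> rw [hc] at h
    · rw [k1.2 h]; exact inf_le_left
    · rw [k2.2 h]; exact inf_le_right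
  · intro h
    have hb1 : TV.F α ≤ y1 := by rw [← h]; exact inf_le_left
    have hb2 : TV.F α ≤ y2 := by rw [← h]; exact inf_le_right
    have key : ∀ x y : TV, Rel α x y → TV.F α ≤ y → TV.F α ≤ x := by
      intro x y hr hy
      by_contra hc
      rcases lt_F_iff.1 (not_le.1 hc) with ⟨b, hb, rfl⟩
      have := hr.1 (Or.inl (lo_F.2 hb))
      rw [← this] at hy
      exact absurd (F_le_F.1 hy) (not_le.2 hb)
    refine le_antisymm ?_ (le_inf (key _ _ h1 hb1) (key _ _ h2 hb2))
    rcases inf_choice y1 y2 with hc | hc <;> rw [hc] at h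
    · rw [← h1.2.2 h]; exact inf_le_left
    · rw [← h2.2.2 h]; exact inf_le_right

theorem rel_negv {α : Ord1} {x y : TV} (h : Rel α x y) : Rel α (negv x) (negv y) := by
  refine ⟨?_, ?_, ?_⟩
  · intro hl
    have hlo : lo α x ∨ lo α y := by
      rcases hl with hl | hl
      · rcases TV.cases x with ⟨b, rfl⟩ | rfl | ⟨b, rfl⟩
        · rw [negv_F] at hl
          exact Or.inl (lo_F.2 (lt_trans b.lt_succ (lo_T.1 hl)))
        · rw [negv_Z] at hl; exact absurd hl not_lo_Z
        · rw [negv_T] at hl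
          exact Or.inl (lo_T.2 (lt_trans b.lt_succ (lo_F.1 hl)))
      · rcases TV.cases y with ⟨b, rfl⟩ | rfl | ⟨b, rfl⟩
        · rw [negv_F] at hl
          exact Or.inr (lo_F.2 (lt_trans b.lt_succ (lo_T.1 hl)))
        · rw [negv_Z] at hl; exact absurd hl not_lo_Z
        · rw [negv_T] at hl
          exact Or.inr (lo_T.2 (lt_trans b.lt_succ (lo_F.1 hl)))
    rw [h.1 hlo]
  · intro hx
    rcases TV.cases x with ⟨b, rfl⟩ | rfl | ⟨b, rfl⟩
    · rw [negv_F] at hx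
      have hba : b < α := T_inj.1 hx ▸ b.lt_succ
      rw [← h.1 (Or.inl (lo_F.2 hba)), negv_F, hx]
    · rw [negv_Z] at hx; exact absurd hx Z_ne_T
    · rw [negv_T] at hx; exact absurd hx F_ne_T
  · intro hy
    rcases TV.cases y with ⟨b, rfl⟩ | rfl | ⟨b, rfl⟩
    · rw [negv_F] at hy; exact absurd hy T_ne_F
    · rw [negv_Z] at hy; exact absurd hy Z_ne_F
    · rw [negv_T] at hy
      have hba : b < α := F_inj.1 hy ▸ b.lt_succ
      rw [h.1 (Or.inr (lo_T.2 hba)), negv_T, hy]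

theorem rel_lit {α : Ord1} {X Y : Interp} (h : ∀ q, Rel α (X q) (Y q)) (l : Lit) :
    Rel α (evalLit X l) (evalLit Y l) := by
  cases l with
  | pos n => exact h n
  | neg n => exact rel_negv (h n)
  | tt => exact rel_refl
  | ff => exact rel_refl

theorem rel_body {α : Ord1} {X Y : Interp} (h : ∀ q, Rel α (X q) (Y q)) (b : List Lit) :
    Rel α (evalBody X b) (evalBody Y b) := by
  induction b with
  | nil => exact rel_refl
  | cons x xs ih =>
    rw [body_cons', body_cons']
    exact rel_inf (rel_lit h x) ih

/-! ### `TP` preserves `Rel` -/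

section lubLemmas

variable {α : Ord1} {P : Program} {p : ℕ} {g g' : Clause → TV}

theorem lub_low_eq
    (hrel : ∀ c ∈ P, c.head = p → (lo α (g c) ∨ lo α (g' c) → g c = g' c))
    (h : lo α (lub {v | ∃ c ∈ P, c.head = p ∧ g c = v})) :
    lub {v | ∃ c ∈ P, c.head = p ∧ g' c = v} = lub {v | ∃ c ∈ P, c.head = p ∧ g c = v} := by
  set S : Set TV := {v | ∃ c ∈ P, c.head = p ∧ g c = v} with hS
  set S' : Set TV := {v | ∃ c ∈ P, c.head = p ∧ g' c = v} with hS'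
  rcases lo_iff.1 h with ⟨b, hb, hv | hv⟩
  · -- lub S = F b with b < α : all bodies are low and equal
    have hw : IsLUB S (TV.F b) := isLUB_of_lub_eq hv F_ne_Z
    have hall : ∀ c ∈ P, c.head = p → g c = g' c := by
      intro c hc hh
      have hle : g c ≤ TV.F b := hw.1 ⟨c, hc, hh, Eq.refl _⟩
      rcases le_F_iff.1 hle with ⟨b', hb', hgb⟩
      exact hrel c hc hh (Or.inl (hgb ▸ lo_F.2 (lt_of_le_of_lt hb' hb)))
    have : S' = S := by
      ext v
      constructor
      · rintro ⟨c, hc, hh, rfl⟩; exact ⟨c, hc, hh, hall c hc hh⟩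
      · rintro ⟨c, hc, hh, rfl⟩; exact ⟨c, hc, hh, (hall c hc hh).symm⟩
    rw [this]
  · -- lub S = T b with b < α
    have hw : IsLUB S (TV.T b) := isLUB_of_lub_eq hv T_ne_Z
    obtain ⟨c, hc, hh, hgc⟩ := isLUB_T_mem hw
    have hgc' : g' c = TV.T b := (hrel c hc hh (Or.inl (hgc ▸ lo_T.2 hb))).symm.trans hgc
    have hw' : IsLUB S' (TV.T b) := by
      constructor
      · rintro v ⟨c', hc', hh', rfl⟩
        by_cases hl : lo α (g c') ∨ lo α (g' c')
        · rw [← hrel c' hc' hh' hl]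
          exact hw.1 ⟨c', hc', hh', Eq.refl _⟩
        · push_neg at hl
          exact (high_lt_Tb hb hl.2).le
      · intro v hv'
        exact hv' ⟨c, hc, hh, hgc'⟩
    rw [hv, lub_eq_of_isLUB hw']

theorem lub_T_eq
    (hrel : ∀ c ∈ P, c.head = p → Rel α (g c) (g' c))
    (h : lub {v | ∃ c ∈ P, c.head = p ∧ g c = v} = TV.T α) :
    lub {v | ∃ c ∈ P, c.head = p ∧ g' c = v} = TV.T α := by
  set S : Set TV := {v | ∃ c ∈ P, c.head = p ∧ g c = v} with hS
  set S' : Set TV := {v | ∃ c ∈ P, c.head = p ∧ g' c = v} with hS'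
  have hw : IsLUB S (TV.T α) := isLUB_of_lub_eq h T_ne_Z
  obtain ⟨c, hc, hh, hgc⟩ := isLUB_T_mem hw
  have hgc' : g' c = TV.T α := (hrel c hc hh).2.1 hgc
  refine lub_eq_of_isLUB ⟨?_, fun v hv' => hv' ⟨c, hc, hh, hgc'⟩⟩
  rintro v ⟨c', hc', hh', rfl⟩
  refine le_T_of fun b hb hTb => ?_
  have := ((hrel c' hc' hh').1 (Or.inr (hTb ▸ lo_T.2 hb))).trans hTb
  have hle := hw.1 ⟨c', hc', hh', Eq.refl _⟩
  rw [this] at hle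
  exact absurd (T_le_T.1 hle) (not_le.2 hb)

theorem lub_F_eq
    (hrel : ∀ c ∈ P, c.head = p → Rel α (g c) (g' c))
    (h : lub {v | ∃ c ∈ P, c.head = p ∧ g' c = v} = TV.F α) :
    lub {v | ∃ c ∈ P, c.head = p ∧ g c = v} = TV.F α := by
  set S : Set TV := {v | ∃ c ∈ P, c.head = p ∧ g c = v} with hS
  set S' : Set TV := {v | ∃ c ∈ P, c.head = p ∧ g' c = v} with hS'
  have hw' : IsLUB S' (TV.F α) := isLUB_of_lub_eq h F_ne_Z
  refine lub_eq_of_isLUB ⟨?_, ?_⟩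
  · rintro v ⟨c, hc, hh, rfl⟩
    have hle : g' c ≤ TV.F α := hw'.1 ⟨c, hc, hh, Eq.refl _⟩
    rcases le_F_iff.1 hle with ⟨b, hb, hgb⟩
    rcases lt_or_eq_of_le hb with hlt | rfl
    · rw [(hrel c hc hh).1 (Or.inr (hgb ▸ lo_F.2 hlt)), hgb]
      exact F_le_F.2 hb
    · rw [(hrel c hc hh).2.2 hgb]
  · intro v hv
    by_contra hcon
    rcases lt_F_iff.1 (not_le.1 hcon) with ⟨b, hb, rfl⟩
    have hub : TV.F b ∈ upperBounds S' := by
      rintro w ⟨c, hc, hh, rfl⟩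
      have hle : g c ≤ TV.F b := hv ⟨c, hc, hh, Eq.refl _⟩
      rcases le_F_iff.1 hle with ⟨b', hb', hgb⟩
      rw [← (hrel c hc hh).1 (Or.inl (hgb ▸ lo_F.2 (lt_of_le_of_lt hb' hb)))]
      exact hle
    exact absurd (F_le_F.1 (hw'.2 hub)) (not_le.2 hb)

end lubLemmas

theorem rel_TP {P : Program} {α : Ord1} {X Y : Interp} (h : ∀ q, Rel α (X q) (Y q)) (p : ℕ) :
    Rel α (TP P X p) (TP P Y p) := by
  have hbody : ∀ c ∈ P, c.head = p → Rel α (evalBody X c.body) (evalBody Y c.body) :=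
    fun c _ _ => rel_body h c.body
  have hX : TP P X p = lub {v | ∃ c ∈ P, c.head = p ∧ evalBody X c.body = v} := rfl
  have hY : TP P Y p = lub {v | ∃ c ∈ P, c.head = p ∧ evalBody Y c.body = v} := rfl
  rw [hX, hY]
  refine ⟨?_, ?_, ?_⟩
  · rintro (hl | hl)
    · exact (lub_low_eq (fun c hc hh => (hbody c hc hh).1) hl).symm
    · exact lub_low_eq (fun c hc hh e => ((hbody c hc hh).1 e.symm).symm) hl
  · exact lub_T_eq hbody
  · exact lub_F_eq hbody

/-! ### `eqA` machinery -/

theorem eqA_iff {α : Ord1} {I J : Interp} :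
    eqA α I J ↔ ∀ β : Ord1, β ≤ α → ∀ p,
      (I p = TV.T β ↔ J p = TV.T β) ∧ (I p = TV.F β ↔ J p = TV.F β) := by
  constructor
  · intro h β hβ p
    obtain ⟨hT, hF⟩ := h β hβ
    exact ⟨Set.ext_iff.1 hT p, Set.ext_iff.1 hF p⟩
  · intro h β hβ
    exact ⟨Set.ext fun p => (h β hβ p).1, Set.ext fun p => (h β hβ p).2⟩

theorem eqA_refl {α : Ord1} {I : Interp} : eqA α I I := fun _ _ => ⟨Eq.refl _, Eq.refl _⟩

theorem eqA_symm {α : Ord1} {I J : Interp} (h : eqA α I J) : eqA α J I := by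
  rw [eqA_iff] at h ⊢
  exact fun β hβ p => ⟨(h β hβ p).1.symm, (h β hβ p).2.symm⟩

theorem eqA_trans {α : Ord1} {I J K : Interp} (h1 : eqA α I J) (h2 : eqA α J K) : eqA α I K := by
  rw [eqA_iff] at h1 h2 ⊢
  exact fun β hβ p => ⟨(h1 β hβ p).1.trans (h2 β hβ p).1, (h1 β hβ p).2.trans (h2 β hβ p).2⟩

theorem eqA_mono {α β : Ord1} {I J : Interp} (hβ : β ≤ α) (h : eqA α I J) : eqA β I J :=
  fun γ hγ => h γ (le_trans hγ hβ)

theorem relPt_of_eqA {α : Ord1} {I J : Interp} (h : eqA α I J) :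
    ∀ p, Rel α (I p) (J p) := by
  rw [eqA_iff] at h
  intro p
  refine ⟨?_, ?_, ?_⟩
  · rintro (hl | hl)
    · rcases lo_iff.1 hl with ⟨b, hb, hv | hv⟩
      · exact hv.trans ((h b hb.le p).2.1 hv).symm
      · exact hv.trans ((h b hb.le p).1.1 hv).symm
    · rcases lo_iff.1 hl with ⟨b, hb, hv | hv⟩
      · exact ((h b hb.le p).2.2 hv).trans hv.symm
      · exact ((h b hb.le p).1.2 hv).trans hv.symm
  · exact (h α le_rfl p).1.1
  · exact (h α le_rfl p).2.2

theorem eqA_of_rel {α : Ord1} {I J : Interp} (h1 : ∀ p, Rel α (I p) (J p))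
    (h2 : ∀ p, Rel α (J p) (I p)) : eqA α I J := by
  rw [eqA_iff]
  intro β hβ p
  rcases lt_or_eq_of_le hβ with hlt | rfl
  · constructor
    · constructor
      · intro hv; exact ((h1 p).1 (Or.inl (hv ▸ lo_T.2 hlt))) ▸ hv
      · intro hv; exact ((h2 p).1 (Or.inl (hv ▸ lo_T.2 hlt))) ▸ hv
    · constructor
      · intro hv; exact ((h1 p).1 (Or.inl (hv ▸ lo_F.2 hlt))) ▸ hv
      · intro hv; exact ((h2 p).1 (Or.inl (hv ▸ lo_F.2 hlt))) ▸ hv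
  · exact ⟨⟨(h1 p).2.1, (h2 p).2.1⟩, ⟨(h2 p).2.2, (h1 p).2.2⟩⟩

theorem eqA_TP {P : Program} {α : Ord1} {I J : Interp} (h : eqA α I J) :
    eqA α (TP P I) (TP P J) :=
  eqA_of_rel (rel_TP (relPt_of_eqA h)) (rel_TP (relPt_of_eqA (eqA_symm h)))

/-! ### `TPomega` basics -/

def iter (P : Program) (I : Interp) (n : ℕ) : Interp := (TP P)^[n] I

theorem iter_zero {P : Program} {I : Interp} : iter P I 0 = I := rfl

theorem iter_succ {P : Program} {I : Interp} (n : ℕ) :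
    iter P I (n + 1) = TP P (iter P I n) := Function.iterate_succ_apply' _ _ _

theorem tpo_low {P : Program} {α : Ord1} {I : Interp} {p : ℕ} (h : lo α (I p)) :
    TPomega P α I p = I p := by
  have h' : ordOf (I p) < (α.1 : WithTop Ordinal) := h
  unfold TPomega; rw [if_pos h']

theorem tpo_T {P : Program} {α : Ord1} {I : Interp} {p : ℕ} (h1 : ¬ lo α (I p))
    (h2 : ∃ n, (TP P)^[n] I p = TV.T α) : TPomega P α I p = TV.T α := by
  have h1' : ¬ ordOf (I p) < (α.1 : WithTop Ordinal) := h1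
  unfold TPomega; rw [if_neg h1', if_pos h2]

theorem tpo_F {P : Program} {α : Ord1} {I : Interp} {p : ℕ} (h1 : ¬ lo α (I p))
    (h2 : ¬ ∃ n, (TP P)^[n] I p = TV.T α) (h3 : ∀ n, (TP P)^[n] I p = TV.F α) :
    TPomega P α I p = TV.F α := by
  have h1' : ¬ ordOf (I p) < (α.1 : WithTop Ordinal) := h1
  unfold TPomega; rw [if_neg h1', if_neg h2, if_pos h3]

theorem tpo_S {P : Program} {α : Ord1} {I : Interp} {p : ℕ} (h1 : ¬ lo α (I p))
    (h2 : ¬ ∃ n, (TP P)^[n] I p = TV.T α) (h3 : ¬ ∀ n, (TP P)^[n] I p = TV.F α) :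
    TPomega P α I p = TV.F α.succ := by
  have h1' : ¬ ordOf (I p) < (α.1 : WithTop Ordinal) := h1
  unfold TPomega; rw [if_neg h1', if_neg h2, if_neg h3]

theorem tpo_cases (P : Program) (α : Ord1) (I : Interp) (p : ℕ) :
    (lo α (I p) ∧ TPomega P α I p = I p) ∨
    (¬ lo α (I p) ∧
      (((∃ n, iter P I n p = TV.T α) ∧ TPomega P α I p = TV.T α) ∨
        ((¬ ∃ n, iter P I n p = TV.T α) ∧
          (((∀ n, iter P I n p = TV.F α) ∧ TPomega P α I p = TV.F α) ∨
            ((¬ ∀ n, iter P I n p = TV.F α) ∧ TPomega P α I p = TV.F α.succ))))) := by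
  by_cases h1 : lo α (I p)
  · exact Or.inl ⟨h1, tpo_low h1⟩
  · refine Or.inr ⟨h1, ?_⟩
    by_cases h2 : ∃ n, iter P I n p = TV.T α
    · exact Or.inl ⟨h2, tpo_T h1 h2⟩
    · refine Or.inr ⟨h2, ?_⟩
      by_cases h3 : ∀ n, iter P I n p = TV.F α
      · exact Or.inl ⟨h3, tpo_F h1 h2 h3⟩
      · exact Or.inr ⟨h3, tpo_S h1 h2 h3⟩

theorem not_lo_of_tpo {P : Program} {α : Ord1} {I : Interp} {p : ℕ} (h : ¬ lo α (I p)) :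
    ¬ lo α (TPomega P α I p) := by
  rcases tpo_cases P α I p with ⟨h1, _⟩ | ⟨_, ⟨_, he⟩ | ⟨_, ⟨_, he⟩ | ⟨_, he⟩⟩⟩
  · exact absurd h1 h
  · rw [he]; exact not_lo_T_self
  · rw [he]; exact not_lo_F_self
  · rw [he]; exact not_lo_F_succ

/-- the low part of `TPomega P α I` agrees with `I` -/
theorem tpo_low_eqA (P : Program) (α : Ord1) (I : Interp) {β : Ord1} (hβ : β < α) :
    eqA β (TPomega P α I) I := by
  rw [eqA_iff]
  intro γ hγ p
  have hγα : γ < α := lt_of_le_of_lt hγ hβ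
  rcases tpo_cases P α I p with ⟨_, he⟩ | ⟨hni, ⟨_, he⟩ | ⟨_, ⟨_, he⟩ | ⟨_, he⟩⟩⟩
  · rw [he]; exact ⟨Iff.rfl, Iff.rfl⟩
  all_goals rw [he]
  · constructor
    · constructor
      · intro hv; exact absurd (T_inj.1 hv) (ne_of_gt hγα)
      · intro hv; exact absurd (hni (hv ▸ lo_T.2 hγα)) not_false
    · constructor
      · intro hv; exact absurd hv T_ne_F
      · intro hv; exact absurd (hni (hv ▸ lo_F.2 hγα)) not_false
  · constructor
    · constructor
      · intro hv; exact absurd hv F_ne_T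
      · intro hv; exact absurd (hni (hv ▸ lo_T.2 hγα)) not_false
    · constructor
      · intro hv; exact absurd (F_inj.1 hv) (ne_of_gt hγα)
      · intro hv; exact absurd (hni (hv ▸ lo_F.2 hγα)) not_false
  · constructor
    · constructor
      · intro hv; exact absurd hv F_ne_T
      · intro hv; exact absurd (hni (hv ▸ lo_T.2 hγα)) not_false
    · constructor
      · intro hv
        exact absurd (F_inj.1 hv) (ne_of_gt (lt_trans hγα α.lt_succ))
      · intro hv; exact absurd (hni (hv ▸ lo_F.2 hγα)) not_false

/-! ### list threshold lemma -/

theorem exists_N {b : List Lit} {Q : Lit → ℕ → Prop}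
    (h : ∀ l ∈ b, ∃ N, ∀ m, N ≤ m → Q l m) :
    ∃ N, ∀ m, N ≤ m → ∀ l ∈ b, Q l m := by
  induction b with
  | nil => exact ⟨0, fun m _ l hl => absurd hl List.not_mem_nil⟩
  | cons x xs ih =>
    obtain ⟨N1, hN1⟩ := h x (List.mem_cons_self)
    obtain ⟨N2, hN2⟩ := ih fun l hl => h l (List.mem_cons_of_mem _ hl)
    refine ⟨max N1 N2, fun m hm l hl => ?_⟩
    rcases List.mem_cons.1 hl with rfl | hl'
    · exact hN1 m (le_trans (le_max_left _ _) hm)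
    · exact hN2 m (le_trans (le_max_right _ _) hm) l hl'

/-! ### the main per-stage theorem -/

section Stage

variable {P : Program} {α : Ord1} {I : Interp}

theorem stage_thm (good : ∀ p, lo α (I p) ∨ I p = TV.F α)
    (gfp : ∀ β : Ord1, β < α → eqA β (TP P I) I) :
    eqA α (TP P (TPomega P α I)) (TPomega P α I) := by
  set M : Interp := TPomega P α I with hM
  -- s1 : base relation between I and TP P I
  have s1a : ∀ p, lo α (I p) ∨ lo α (TP P I p) → I p = TP P I p := by
    rintro p (hl | hl)
    · rcases lo_iff.1 hl with ⟨b, hb, hv | hv⟩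
      · exact hv.trans ((eqA_iff.1 (gfp b hb) b le_rfl p).2.mpr hv).symm
      · exact hv.trans ((eqA_iff.1 (gfp b hb) b le_rfl p).1.mpr hv).symm
    · rcases lo_iff.1 hl with ⟨b, hb, hv | hv⟩
      · exact ((eqA_iff.1 (gfp b hb) b le_rfl p).2.mp hv).trans hv.symm
      · exact ((eqA_iff.1 (gfp b hb) b le_rfl p).1.mp hv).trans hv.symm
  have s1 : ∀ p, Rel α (I p) (TP P I p) := by
    intro p
    refine ⟨s1a p, ?_, ?_⟩
    · intro h
      rcases good p with hl | hf
      · exact absurd (h ▸ hl) not_lo_T_self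
      · exact absurd (hf ▸ h) T_ne_F.symm
    · intro h
      rcases good p with hl | hf
      · have := (s1a p (Or.inl hl)).trans h
        exact absurd (this ▸ hl) not_lo_F_self
      · exact hf
  -- s2 : the iteration is a Rel-chain
  have s2 : ∀ n q, Rel α (iter P I n q) (iter P I (n + 1) q) := by
    intro n
    induction n with
    | zero =>
      intro q
      rw [iter_succ 0, iter_zero]
      exact s1 q
    | succ n ih =>
      have := rel_TP (P := P) ih
      intro q
      rw [iter_succ (n + 1), iter_succ n]
      have ih' : ∀ q', Rel α (iter P I n q') (TP P (iter P I n) q') := by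
        intro q'; rw [← iter_succ n]; exact ih q'
      rw [iter_succ n] at ih
      exact rel_TP ih q
  -- s3 : low values are stable along the iteration
  have s3a : ∀ n p, lo α (I p) → iter P I n p = I p := by
    intro n
    induction n with
    | zero => intro p _; rfl
    | succ n ih =>
      intro p hl
      have h1 := ih p hl
      have h2 : lo α (iter P I n p) := h1 ▸ hl
      exact ((s2 n p).1 (Or.inl h2)).symm.trans h1
  have s3b : ∀ n p, lo α (iter P I n p) → iter P I n p = I p := by
    intro n
    induction n with
    | zero => intro p _; rfl
    | succ n ih =>
      intro p hl
      have h1 : iter P I n p = iter P I (n + 1) p := (s2 n p).1 (Or.inr hl)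
      have h2 : lo α (iter P I n p) := by rw [h1]; exact hl
      exact h1.symm.trans (ih p h2)
  -- s4 : persistence of T α, antitonicity of F α
  have s4T : ∀ n p, iter P I n p = TV.T α → ∀ m, n ≤ m → iter P I m p = TV.T α := by
    intro n p h m hm
    induction m, hm using Nat.le_induction with
    | base => exact h
    | succ m _ ih => exact (s2 m p).2.1 ih
  have s4F : ∀ m p, iter P I m p = TV.F α → ∀ n, n ≤ m → iter P I n p = TV.F α := by
    intro m p h n hn
    obtain ⟨k, rfl⟩ := Nat.exists_eq_add_of_le hn
    clear hn
    induction k with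
    | zero => exact h
    | succ k ih => exact ih ((s2 (n + k) p).2.2 h)
  -- s5 : each iterate is Rel-below M
  have s5 : ∀ n p, Rel α (iter P I n p) (M p) := by
    intro n p
    refine ⟨?_, ?_, ?_⟩
    · rintro (hl | hl)
      · have h1 := s3b n p hl
        have h2 : lo α (I p) := h1 ▸ hl
        rw [h1, hM, tpo_low h2]
      · rcases tpo_cases P α I p with ⟨hlo, he⟩ | ⟨hni, _⟩
        · rw [← hM] at he
          rw [he, s3a n p hlo]
        · exact absurd (hM ▸ hl) (not_lo_of_tpo hni)
    · intro h
      have hni : ¬ lo α (I p) := by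
        intro hlo
        have := (s3a n p hlo) ▸ h
        exact absurd (this ▸ hlo) not_lo_T_self
      rw [hM]
      exact tpo_T hni ⟨n, h⟩
    · intro h
      rcases tpo_cases P α I p with ⟨hlo, he⟩ | ⟨hni, ⟨_, he⟩ | ⟨_, ⟨hall, _⟩ | ⟨_, he⟩⟩⟩
      · rw [← hM] at he
        rw [he] at h
        exact absurd (h ▸ hlo) not_lo_F_self
      · rw [← hM] at he; rw [he] at h; exact absurd h T_ne_F
      · exact hall n
      · rw [← hM] at he; rw [he] at h
        exact absurd (F_inj.1 h) α.succ_ne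
  -- s6 : the low part of `TP P M` agrees with `M`
  have s6 : ∀ β : Ord1, β < α → eqA β (TP P M) M := by
    intro β hβ
    have h1 : eqA β M I := tpo_low_eqA P α I hβ
    exact eqA_trans (eqA_trans (eqA_TP h1) (gfp β hβ)) (eqA_symm h1)
  have s6' : ∀ p, lo α (TP P M p) ∨ lo α (M p) → TP P M p = M p := by
    rintro p (hl | hl)
    · rcases lo_iff.1 hl with ⟨b, hb, hv | hv⟩
      · exact hv.trans ((eqA_iff.1 (s6 b hb) b le_rfl p).2.mp hv).symm
      · exact hv.trans ((eqA_iff.1 (s6 b hb) b le_rfl p).1.mp hv).symm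
    · rcases lo_iff.1 hl with ⟨b, hb, hv | hv⟩
      · exact ((eqA_iff.1 (s6 b hb) b le_rfl p).2.mpr hv).trans hv.symm
      · exact ((eqA_iff.1 (s6 b hb) b le_rfl p).1.mpr hv).trans hv.symm
  -- s5TP : relation between the iterates and TP P M
  have s5TP : ∀ n p, Rel α (iter P I (n + 1) p) (TP P M p) := by
    intro n p
    rw [iter_succ n]
    exact rel_TP (s5 n) p
  -- s7 : forward T
  have s7 : ∀ p, M p = TV.T α → TP P M p = TV.T α := by
    intro p h
    have hex : ∃ n, iter P I n p = TV.T α := by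
      rcases tpo_cases P α I p with ⟨hlo, he⟩ | ⟨hni, ⟨hex, _⟩ | ⟨_, ⟨_, he⟩ | ⟨_, he⟩⟩⟩
      · rw [← hM] at he; rw [he] at h; exact absurd (h ▸ hlo) not_lo_T_self
      · exact hex
      · rw [← hM] at he; rw [he] at h; exact absurd h.symm T_ne_F
      · rw [← hM] at he; rw [he] at h; exact absurd h.symm T_ne_F
    obtain ⟨n, hn⟩ := hex
    exact (s5TP n p).2.1 ((s2 n p).2.1 hn)
  -- s8 : forward F
  have s8 : ∀ p, TP P M p = TV.F α → M p = TV.F α := by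
    intro p h
    have hni : ¬ lo α (I p) := by
      intro hlo
      have hMI : M p = I p := hM ▸ tpo_low hlo
      have := (s6' p (Or.inr (by rw [hMI]; exact hlo))).trans hMI
      rw [h] at this
      exact absurd (this ▸ hlo) not_lo_F_self
    have hall : ∀ n, iter P I n p = TV.F α := by
      intro n
      induction n with
      | zero =>
        rcases good p with hlo | hf
        · exact absurd hlo hni
        · exact hf
      | succ n _ => exact (s5TP n p).2.2 h
    refine hM ▸ tpo_F hni ?_ hall
    rintro ⟨n, hn⟩
    exact absurd ((hall n).symm.trans hn) T_ne_F.symm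
  -- s9 : backward T
  have s9 : ∀ p, TP P M p = TV.T α → M p = TV.T α := by
    intro p h
    have hw : IsLUB {v | ∃ c ∈ P, c.head = p ∧ evalBody M c.body = v} (TV.T α) :=
      isLUB_of_lub_eq h T_ne_Z
    obtain ⟨c, hc, hh, hbc⟩ := isLUB_T_mem hw
    have hlits : ∀ l ∈ c.body, TV.T α ≤ evalLit M l := fun l hl => hbc ▸ body_le hl
    have key : ∀ l ∈ c.body, ∃ N, ∀ m, N ≤ m → evalLit (iter P I m) l = evalLit M l := by
      intro l hl
      have hTle := hlits l hl
      cases l with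
      | pos q =>
        rcases T_le_iff.1 hTle with ⟨b, hb, hq0⟩
        have hq : M q = TV.T b := hq0
        rcases eq_or_lt_of_le hb with heq | hlt
        · rw [heq] at hq
          have hex : ∃ n, iter P I n q = TV.T α := by
            rcases tpo_cases P α I q with ⟨hlo, he⟩ | ⟨hni, ⟨hex, _⟩ | ⟨_, ⟨_, he⟩ | ⟨_, he⟩⟩⟩
            · rw [← hM] at he
              have : lo α (TV.T α) := (he.symm.trans hq) ▸ hlo
              exact absurd this not_lo_T_self
            · exact hex
            · rw [← hM] at he; exact absurd (he.symm.trans hq) F_ne_T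
            · rw [← hM] at he; exact absurd (he.symm.trans hq) F_ne_T
          obtain ⟨n, hn⟩ := hex
          refine ⟨n, fun m hm => ?_⟩
          show iter P I m q = M q
          rw [s4T n q hn m hm, hq]
        · have hloM : lo α (M q) := by rw [hq]; exact lo_T.2 hlt
          exact ⟨0, fun m _ => (s5 m q).1 (Or.inr hloM)⟩
      | neg q =>
        have : negv (M q) = evalLit M (Lit.neg q) := rfl
        rcases TV.cases (M q) with ⟨e, hq⟩ | hq | ⟨e, hq⟩
        · have hloM : lo α (M q) := by
            rw [hq, lo_F]
            rcases T_le_iff.1 hTle with ⟨b, hb, hv⟩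
            have : TV.T e.succ = TV.T b := by
              rw [← hv]; show TV.T e.succ = negv (M q); rw [hq, negv_F]
            exact lt_of_lt_of_le (T_inj.1 this ▸ e.lt_succ) hb
          exact ⟨0, fun m _ => by
            show negv (iter P I m q) = negv (M q)
            rw [(s5 m q).1 (Or.inr hloM)]⟩
        · exfalso
          have : evalLit M (Lit.neg q) = TV.Z := by show negv (M q) = TV.Z; rw [hq, negv_Z]
          rw [this] at hTle
          exact absurd hTle (not_le.2 Z_lt_T)
        · exfalso
          have : evalLit M (Lit.neg q) = TV.F e.succ := by
            show negv (M q) = TV.F e.succ; rw [hq, negv_T]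
          rw [this] at hTle
          exact absurd hTle (not_le.2 F_lt_T)
      | tt => exact ⟨0, fun m _ => rfl⟩
      | ff =>
        exfalso
        exact absurd hTle (not_le.2 F_lt_T)
    obtain ⟨N, hN⟩ := exists_N key
    have hbodyN : evalBody (iter P I N) c.body = TV.T α :=
      (body_eq_of_lits (hN N le_rfl)).trans hbc
    have hlubN : TP P (iter P I N) p = TV.T α := by
      refine lub_eq_of_isLUB ⟨?_, fun v hv => hv ⟨c, hc, hh, hbodyN⟩⟩
      rintro v ⟨c', hc', hh', rfl⟩
      refine le_T_of fun b hb hTb => ?_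
      have hlo : lo α (evalBody (iter P I N) c'.body) := hTb ▸ lo_T.2 hb
      have heq := (rel_body (s5 N) c'.body).1 (Or.inl hlo)
      have hle := hw.1 ⟨c', hc', hh', Eq.refl _⟩
      rw [← heq, hTb] at hle
      exact absurd (T_le_T.1 hle) (not_le.2 hb)
    have hN1 : iter P I (N + 1) p = TV.T α := by rw [iter_succ N]; exact hlubN
    have hni : ¬ lo α (I p) := by
      intro hlo
      have := (s3a (N + 1) p hlo) ▸ hN1
      exact absurd (this ▸ hlo) not_lo_T_self
    exact hM ▸ tpo_T hni ⟨N + 1, hN1⟩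
  -- s10 : backward F
  have s10 : ∀ p, M p = TV.F α → TP P M p = TV.F α := by
    intro p h
    have hall : ∀ n, iter P I n p = TV.F α := fun n => (s5 n p).2.2 h
    refine lub_eq_of_isLUB ⟨?_, ?_⟩
    · rintro v ⟨c, hc, hh, rfl⟩
      by_contra hgt'
      have hgt : TV.F α < evalBody M c.body := not_le.1 hgt'
      have hlits : ∀ l ∈ c.body, TV.F α < evalLit M l :=
        fun l hl => lt_of_lt_of_le hgt (body_le hl)
      have key : ∀ l ∈ c.body, ∃ N, ∀ m, N ≤ m → TV.F α < evalLit (iter P I m) l := by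
        intro l hl
        have hFlt := hlits l hl
        cases l with
        | pos q =>
          rcases tpo_cases P α I q with ⟨hlo, he⟩ | ⟨hni, ⟨⟨n, hn⟩, he⟩ | ⟨_, ⟨hallq, he⟩ | ⟨hnall, he⟩⟩⟩
          all_goals rw [← hM] at he
          · refine ⟨0, fun m _ => ?_⟩
            show TV.F α < iter P I m q
            rw [s3a m q hlo, ← he]
            exact hFlt
          · refine ⟨n, fun m hm => ?_⟩
            show TV.F α < iter P I m q
            rw [s4T n q hn m hm]
            exact F_lt_T
          · exfalso
            have hFlt' : TV.F α < M q := hFlt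
            rw [he] at hFlt'
            exact lt_irrefl _ hFlt'
          · push_neg at hnall
            obtain ⟨n0, hn0⟩ := hnall
            refine ⟨n0, fun m hm => ?_⟩
            show TV.F α < iter P I m q
            refine F_lt_of_ne_F fun b hb hFb => ?_
            rcases lt_or_eq_of_le hb with hblt | rfl
            · have hloq : lo α (iter P I m q) := hFb ▸ lo_F.2 hblt
              have h1 := s3b m q hloq
              have h2 : lo α (I q) := h1 ▸ hloq
              have h3 : M q = I q := hM ▸ tpo_low h2
              rw [he] at h3
              rw [← h1, hFb] at h3
              exact absurd (F_inj.1 h3.symm)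
                (ne_of_lt (lt_trans hblt α.lt_succ))
            · exact hn0 (s4F m q hFb n0 hm)
        | neg q =>
          refine ⟨0, fun m _ => ?_⟩
          show TV.F α < negv (iter P I m q)
          refine F_lt_of_ne_F fun b hb hFb => ?_
          rcases TV.cases (iter P I m q) with ⟨e, he⟩ | he | ⟨e, he⟩
          · rw [he, negv_F] at hFb; exact absurd hFb T_ne_F
          · rw [he, negv_Z] at hFb; exact absurd hFb Z_ne_F
          · rw [he, negv_T] at hFb
            have hesucc : e.succ = b := F_inj.1 hFb
            have heα : e < α := lt_of_lt_of_le (hesucc ▸ e.lt_succ) hb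
            have hloq : lo α (iter P I m q) := he ▸ lo_T.2 heα
            have h1 := s3b m q hloq
            have h2 : lo α (I q) := h1 ▸ hloq
            have h3 : M q = I q := hM ▸ tpo_low h2
            have h4 : M q = TV.T e := h3.trans (h1.symm.trans he)
            have h5 : evalLit M (Lit.neg q) = TV.F e.succ := by
              show negv (M q) = TV.F e.succ; rw [h4, negv_T]
            rw [h5, hesucc] at hFlt
            exact absurd (F_lt_F.1 hFlt) (not_lt.2 hb)
        | tt => exact ⟨0, fun m _ => F_lt_T⟩
        | ff =>
          exfalso
          have : evalLit M Lit.ff = TV.F O0 := rfl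
          rw [this] at hFlt
          exact absurd (F_lt_F.1 hFlt) (by
            intro hcon
            exact not_lt_zero (show α.1 < (0 : Ordinal) from hcon))
      obtain ⟨N, hN⟩ := exists_N key
      have hlt : TV.F α < evalBody (iter P I N) c.body :=
        lt_body F_lt_T (fun l hl => hN N le_rfl l hl)
      have hN1 : iter P I (N + 1) p = TV.F α := hall (N + 1)
      rw [iter_succ N] at hN1
      have hwN : IsLUB {v | ∃ c' ∈ P, c'.head = p ∧ evalBody (iter P I N) c'.body = v}
          (TV.F α) := isLUB_of_lub_eq hN1 F_ne_Z
      exact absurd (hwN.1 ⟨c, hc, hh, Eq.refl _⟩) (not_le.2 hlt)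
    · intro v hv
      by_contra hcon
      rcases lt_F_iff.1 (not_le.1 hcon) with ⟨b, hb, rfl⟩
      have hub0 : TV.F b ∈ upperBounds {v | ∃ c ∈ P, c.head = p ∧ evalBody I c.body = v} := by
        rintro w ⟨c, hc, hh, rfl⟩
        have hm : evalBody M c.body ≤ TV.F b := hv ⟨c, hc, hh, Eq.refl _⟩
        rcases le_F_iff.1 hm with ⟨b', hb', hgb⟩
        have hlo : lo α (evalBody M c.body) := hgb ▸ lo_F.2 (lt_of_le_of_lt hb' hb)
        have heq : evalBody I c.body = evalBody M c.body :=
          (rel_body (s5 0) c.body).1 (Or.inr hlo)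
        rw [heq]
        exact hm
      have h1 : iter P I 1 p = TV.F α := hall 1
      rw [iter_succ 0] at h1
      have hwI : IsLUB {v | ∃ c ∈ P, c.head = p ∧ evalBody I c.body = v} (TV.F α) :=
        isLUB_of_lub_eq h1 F_ne_Z
      exact absurd (F_le_F.1 (hwI.2 hub0)) (not_le.2 hb)
  -- assemble
  refine eqA_of_rel (fun p => ⟨fun hl => s6' p hl, s9 p, s10 p⟩)
    (fun p => ⟨fun hl => (s6' p (Or.symm hl)).symm, s7 p, s8 p⟩)

end Stage

/-! ### the approximations `M_α` -/

theorem MA_zero (P : Program) : MA P 0 = TPomega P O0 botI := by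
  unfold MA
  rw [Ordinal.limitRecOn_zero]

theorem MA_succ (P : Program) (o : Ordinal) (h : o + 1 < ω₁) :
    MA P (o + 1) = TPomega P ⟨o + 1, h⟩ (MA P o) := by
  have h1 : MA P (o + 1) =
      if h' : o + 1 < ω₁ then TPomega P ⟨o + 1, h'⟩ (MA P o) else MA P o := by
    unfold MA
    rw [Ordinal.add_one_eq_succ, Ordinal.limitRecOn_succ]
    rfl
  rw [h1, dif_pos h]

theorem MA_limit (P : Program) (o : Ordinal) (hl : Order.IsSuccLimit o) (h : o < ω₁) :
    MA P o = TPomega P ⟨o, h⟩ (sqcupI ⟨o, h⟩ fun b _ => MA P b) := by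
  have h1 : MA P o =
      if h' : o < ω₁ then
        TPomega P ⟨o, h'⟩ (sqcupI ⟨o, h'⟩ fun b _ => MA P b) else botI := by
    unfold MA
    rw [Ordinal.limitRecOn_limit _ _ _ _ hl]
  rw [h1, dif_pos h]

theorem sq_val {α : Ord1} {f : ∀ b : Ordinal, b < α.1 → Interp} {p : ℕ}
    (hex : ∃ b : Ordinal, ∃ hb : b < α.1, ordOf (f b hb p) = (b : WithTop Ordinal)) :
    ∃ b : Ordinal, ∃ hb : b < α.1,
      ordOf (f b hb p) = (b : WithTop Ordinal) ∧ sqcupI α f p = f b hb p := by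
  refine ⟨hex.choose, hex.choose_spec.choose, hex.choose_spec.choose_spec, ?_⟩
  unfold sqcupI
  rw [dif_pos hex]

theorem sq_neg {α : Ord1} {f : ∀ b : Ordinal, b < α.1 → Interp} {p : ℕ}
    (hex : ¬ ∃ b : Ordinal, ∃ hb : b < α.1, ordOf (f b hb p) = (b : WithTop Ordinal)) :
    sqcupI α f p = TV.F α := by
  unfold sqcupI
  rw [dif_neg hex]

theorem tpo_good {P : Program} {β : Ord1} {J : Interp} (α : Ord1) (hs : β.succ = α) :
    ∀ p, lo α (TPomega P β J p) ∨ TPomega P β J p = TV.F α := by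
  intro p
  have hβα : β < α := hs ▸ β.lt_succ
  rcases tpo_cases P β J p with ⟨hlo, he⟩ | ⟨_, ⟨_, he⟩ | ⟨_, ⟨_, he⟩ | ⟨_, he⟩⟩⟩ <;> rw [he]
  · exact Or.inl (lt_trans hlo (WithTop.coe_lt_coe.2 hβα))
  · exact Or.inl (lo_T.2 hβα)
  · exact Or.inl (lo_F.2 hβα)
  · rw [hs]
    exact Or.inr (Eq.refl _)

theorem lt_add_one_self (o : Ordinal) : o < o + 1 := by
  rw [Ordinal.add_one_eq_succ]; exact Order.lt_succ o

theorem MA_good (P : Program) (o : Ordinal) (h1 : o + 1 < ω₁) :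
    ∀ p, lo ⟨o + 1, h1⟩ (MA P o p) ∨ MA P o p = TV.F ⟨o + 1, h1⟩ := by
  have ho : o < ω₁ := lt_trans (lt_add_one_self o) h1
  rcases Ordinal.zero_or_succ_or_isSuccLimit o with rfl | ⟨a, ha⟩ | hl
  · rw [MA_zero]
    exact tpo_good _ (Subtype.ext rfl)
  · obtain rfl : o = a + 1 := ha.symm.trans (Ordinal.add_one_eq_succ a).symm
    rw [MA_succ P a ho]
    exact tpo_good _ (Subtype.ext rfl)
  · rw [MA_limit P o hl ho]
    exact tpo_good _ (Subtype.ext rfl)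

theorem sqcup_good {α : Ord1} {f : ∀ b : Ordinal, b < α.1 → Interp} :
    ∀ p, lo α (sqcupI α f p) ∨ sqcupI α f p = TV.F α := by
  intro p
  by_cases hex : ∃ b : Ordinal, ∃ hb : b < α.1, ordOf (f b hb p) = (b : WithTop Ordinal)
  · obtain ⟨b, hb, hord, hval⟩ := sq_val hex
    refine Or.inl ?_
    rw [hval]
    show ordOf (f b hb p) < (α.1 : WithTop Ordinal)
    rw [hord]
    exact WithTop.coe_lt_coe.2 hb
  · exact Or.inr (sq_neg hex)

/-! ### coherence of the approximations -/

theorem sqcup_eqA (P : Program) {o : Ordinal} (ho : o < ω₁)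
    (ihc : ∀ bb cc : Ordinal, ∀ hbc : bb ≤ cc, ∀ hco : cc < o,
      eqA ⟨bb, lt_of_le_of_lt hbc (lt_trans hco ho)⟩ (MA P bb) (MA P cc))
    {β : Ordinal} (hβ : β < o) :
    eqA ⟨β, lt_trans hβ ho⟩ (sqcupI ⟨o, ho⟩ fun b _ => MA P b) (MA P β) := by
  rw [eqA_iff]
  intro γ hγ p
  have hγβ : γ.1 ≤ β := hγ
  have hγo : γ.1 < o := lt_of_le_of_lt hγβ hβ
  have key : ∀ v : TV, v = TV.T γ ∨ v = TV.F γ →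
      ((sqcupI ⟨o, ho⟩ fun b _ => MA P b) p = v ↔ MA P β p = v) := by
    intro v hv
    have hvord : ordOf v = (γ.1 : WithTop Ordinal) := by
      rcases hv with rfl | rfl
      · exact ordOf_T γ
      · exact ordOf_F γ
    constructor
    · intro hs
      by_cases hex : ∃ b : Ordinal, ∃ hb : b < o, ordOf (MA P b p) = (b : WithTop Ordinal)
      · obtain ⟨b, hb, hord, hval⟩ := sq_val (α := ⟨o, ho⟩) (f := fun b _ => MA P b) hex
        have hbv : MA P b p = v := hval ▸ hs
        have hbγ : b = γ.1 := by
          have := hbv ▸ hord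
          rw [hvord] at this
          exact (WithTop.coe_inj.1 this).symm
        rw [hbγ] at hbv
        have hcoh := ihc γ.1 β hγβ hβ
        rcases hv with rfl | rfl
        · exact (eqA_iff.1 hcoh γ le_rfl p).1.mp hbv
        · exact (eqA_iff.1 hcoh γ le_rfl p).2.mp hbv
      · rw [sq_neg hex] at hs
        exfalso
        rcases hv with rfl | rfl
        · exact F_ne_T hs
        · have : o = γ.1 := congrArg Subtype.val (F_inj.1 hs)
          exact absurd (this ▸ hγo) (lt_irrefl _)
    · intro hm
      have hγv : MA P γ.1 p = v := by
        have hcoh := ihc γ.1 β hγβ hβ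
        rcases hv with rfl | rfl
        · exact (eqA_iff.1 hcoh γ le_rfl p).1.mpr hm
        · exact (eqA_iff.1 hcoh γ le_rfl p).2.mpr hm
      have hex : ∃ b : Ordinal, ∃ hb : b < o, ordOf (MA P b p) = (b : WithTop Ordinal) :=
        ⟨γ.1, hγo, by rw [hγv]; exact hvord⟩
      obtain ⟨b, hb, hord, hval⟩ := sq_val (α := ⟨o, ho⟩) (f := fun b _ => MA P b) hex
      rw [hval]
      rcases lt_trichotomy b γ.1 with hbγ | hbγ | hbγ
      · exfalso
        have hbβ : b ≤ β := le_trans (le_of_lt hbγ) hγβ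
        have hcoh := ihc b β hbβ hβ
        rcases ordOf_eq_iff.1 hord with ⟨a, ha, hfv | hfv⟩
        · have : MA P β p = TV.F a := (eqA_iff.1 hcoh a (le_of_eq (Subtype.ext ha)) p).2.mp hfv
          rw [hm] at this
          rcases hv with rfl | rfl
          · exact F_ne_T this.symm
          · have h2 : γ.1 = a.1 := congrArg Subtype.val (F_inj.1 this)
            rw [ha] at h2
            exact absurd (h2 ▸ hbγ) (lt_irrefl _)
        · have : MA P β p = TV.T a := (eqA_iff.1 hcoh a (le_of_eq (Subtype.ext ha)) p).1.mp hfv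
          rw [hm] at this
          rcases hv with rfl | rfl
          · have h2 : γ.1 = a.1 := congrArg Subtype.val (T_inj.1 this)
            rw [ha] at h2
            exact absurd (h2 ▸ hbγ) (lt_irrefl _)
          · exact F_ne_T this
      · show MA P b p = v
        rw [hbγ]
        exact hγv
      · exfalso
        have hcoh := ihc γ.1 b (le_of_lt hbγ) hb
        have : MA P b p = v := by
          rcases hv with rfl | rfl
          · exact (eqA_iff.1 hcoh γ le_rfl p).1.mp hγv
          · exact (eqA_iff.1 hcoh γ le_rfl p).2.mp hγv
        rw [this, hvord] at hord
        exact absurd (WithTop.coe_inj.1 hord ▸ hbγ) (lt_irrefl _)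
  exact ⟨key (TV.T γ) (Or.inl (Eq.refl _)), key (TV.F γ) (Or.inr (Eq.refl _))⟩

theorem coh (P : Program) : ∀ o : Ordinal, ∀ ho : o < ω₁, ∀ b : Ordinal, ∀ hb : b ≤ o,
    eqA ⟨b, lt_of_le_of_lt hb ho⟩ (MA P b) (MA P o) := by
  intro o
  induction o using Ordinal.induction with
  | h o IH =>
    intro ho b hb
    rcases eq_or_lt_of_le hb with rfl | hlt
    · exact eqA_refl
    · rcases Ordinal.zero_or_succ_or_isSuccLimit o with rfl | ⟨a, ha⟩ | hl
      · exact absurd hlt not_lt_zero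
      · obtain rfl : o = a + 1 := ha.symm.trans (Ordinal.add_one_eq_succ a).symm
        have haω : a < ω₁ := lt_trans (lt_add_one_self a) ho
        have hba : b ≤ a := by
          have := hlt
          rw [Ordinal.add_one_eq_succ, Order.lt_succ_iff] at this
          exact this
        have h1 : eqA ⟨b, lt_of_le_of_lt hb ho⟩ (MA P (a + 1)) (MA P a) := by
          rw [MA_succ P a ho]
          exact tpo_low_eqA P ⟨a + 1, ho⟩ (MA P a)
            (show (⟨b, _⟩ : Ord1) < ⟨a + 1, ho⟩ from hlt)
        have h2 := IH a (lt_add_one_self a) haω b hba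
        exact eqA_trans h2 (eqA_symm h1)
      · have h1 : eqA ⟨b, lt_of_le_of_lt hb ho⟩ (MA P o)
            (sqcupI ⟨o, ho⟩ fun c _ => MA P c) := by
          rw [MA_limit P o hl ho]
          exact tpo_low_eqA P ⟨o, ho⟩ _ (show (⟨b, _⟩ : Ord1) < ⟨o, ho⟩ from hlt)
        have h2 : eqA ⟨b, lt_of_le_of_lt hb ho⟩
            (sqcupI ⟨o, ho⟩ fun c _ => MA P c) (MA P b) := by
          exact sqcup_eqA P ho
            (fun bb cc hbc hco => IH cc hco (lt_trans hco ho) bb hbc) hlt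
        exact eqA_trans (eqA_symm h2) (eqA_symm h1)

/-! ### the main theorem -/

theorem main_thm (P : Program) : ∀ o : Ordinal, ∀ ho : o < ω₁,
    eqA ⟨o, ho⟩ (TP P (MA P o)) (MA P o) := by
  intro o
  induction o using Ordinal.induction with
  | h o IH =>
    intro ho
    rcases Ordinal.zero_or_succ_or_isSuccLimit o with rfl | ⟨a, ha⟩ | hl
    · rw [MA_zero]
      have good0 : ∀ p, lo O0 (botI p) ∨ botI p = TV.F O0 := fun _ => Or.inr (Eq.refl _)
      have gfp0 : ∀ β : Ord1, β < O0 → eqA β (TP P botI) botI := by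
        intro β hβ
        exact absurd (show β.1 < (0 : Ordinal) from hβ) not_lt_zero
      exact stage_thm good0 gfp0
    · obtain rfl : o = a + 1 := ha.symm.trans (Ordinal.add_one_eq_succ a).symm
      have haω : a < ω₁ := lt_trans (lt_add_one_self a) ho
      rw [MA_succ P a ho]
      have gfp1 : ∀ β : Ord1, β < ⟨a + 1, ho⟩ → eqA β (TP P (MA P a)) (MA P a) := by
        intro β hβ
        have hβa : β.1 ≤ a := by
          have : β.1 < a + 1 := hβ
          rw [Ordinal.add_one_eq_succ, Order.lt_succ_iff] at this
          exact this
        have hIH := IH a (lt_add_one_self a) haω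
        exact eqA_mono (show β ≤ ⟨a, haω⟩ from hβa) hIH
      exact stage_thm (MA_good P a ho) gfp1
    · rw [MA_limit P o hl ho]
      have gfpl : ∀ β : Ord1, β < ⟨o, ho⟩ →
          eqA β (TP P (sqcupI ⟨o, ho⟩ fun b _ => MA P b)) (sqcupI ⟨o, ho⟩ fun b _ => MA P b) := by
        intro β hβ
        have hβo : β.1 < o := hβ
        have hcoh : eqA ⟨β.1, lt_trans hβo ho⟩
            (sqcupI ⟨o, ho⟩ fun b _ => MA P b) (MA P β.1) :=
          sqcup_eqA P ho
            (fun bb cc hbc hco => coh P cc (lt_trans hco ho) bb hbc) hβo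
        have hcoh' : eqA β (sqcupI ⟨o, ho⟩ fun b _ => MA P b) (MA P β.1) := hcoh
        have hIH : eqA β (TP P (MA P β.1)) (MA P β.1) := IH β.1 hβo β.2
        exact eqA_trans (eqA_trans (eqA_TP hcoh') hIH) (eqA_symm hcoh')
      exact stage_thm sqcup_good gfpl

-- MORE

end Lemmas

/-- For every countable ordinal `α`, `T_P(M_α) =_α M_α`. -/
theorem TP_MA_eqA (P : Program) (α : Ord1) : eqA α (TP P (Mα P α)) (Mα P α) :=
  main_thm P α.1 α.2

end IVS
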